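/- Let k ∈ {1,2} and let T and T̃ be two binary phylogenetic X-trees. Then T ≅ T̃ if and only if A_k(T) = A_k(T̃). -/

import Mathlib

open SimpleGraph

/-- A binary phylogenetic `X`-tree: a finite tree whose leaves (vertices of degree
at most 1) are bijectively labeled by the taxa in `X` and all of whose internal
vertices have degree 3. -/
structure PhyloTree (X : Type*) where
  V : Type*
  fintypeV : Fintype V
  G : SimpleGraph V
  isTree : G.IsTree
  leaf : X → V
  leaf_inj : Function.Injective leaf
  leaf_iff : ∀ v : V, (G.neighborSet v).ncard ≤ 1 ↔ ∃ x, leaf x = v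
  binary : ∀ v : V, (G.neighborSet v).ncard = 1 ∨ (G.neighborSet v).ncard = 3

namespace PhyloTree

variable {X : Type*}

/-- The number of changing edges of an extension `g : V → Bool` on `T`. -/
noncomputable def changingNumber (T : PhyloTree X) (g : T.V → Bool) : ℕ :=
  {e ∈ T.G.edgeSet | ¬ (Sym2.map g e).IsDiag}.ncard

/-- The parsimony score `l(f,T)` of a binary character `f : X → Bool` on `T`:
the minimal number of changing edges over all extensions of `f` on `T`. -/
noncomputable def parsimony (T : PhyloTree X) (f : X → Bool) : ℕ :=
  sInf {n : ℕ | ∃ g : T.V → Bool, (∀ x : X, g (T.leaf x) = f x) ∧ T.changingNumber g = n}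

/-- `A_k(T)`: the set of binary characters with parsimony score `k` on `T`. -/
def Ak (T : PhyloTree X) (k : ℕ) : Set (X → Bool) :=
  {f | T.parsimony f = k}

/-- Leaf-label-preserving isomorphism of phylogenetic `X`-trees. -/
def Isomorphic (T T' : PhyloTree X) : Prop :=
  ∃ φ : T.G ≃g T'.G, ∀ x : X, φ (T.leaf x) = T'.leaf x

/-- The set of leaf vertices of `T`. -/
def leafSet (T : PhyloTree X) : Set T.V := Set.range T.leaf

/-- The set of taxa lying on the `u`-side of the edge `{u,v}` of `T`. -/
def side (T : PhyloTree X) (u v : T.V) : Set X :=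
  {x | (T.G.deleteEdges {s(u, v)}).Reachable (T.leaf x) u}

/-- The split sides of `T`: all taxon sets cut off by some edge of `T`. -/
def splits (T : PhyloTree X) : Set (Set X) :=
  {S | ∃ u v : T.V, T.G.Adj u v ∧ S = T.side u v}

/-- `[x,y]` is a cherry of `T`: two distinct leaves adjacent to the same vertex. -/
def IsCherry (T : PhyloTree X) (x y : X) : Prop :=
  x ≠ y ∧ ∃ u : T.V, T.G.Adj (T.leaf x) u ∧ T.G.Adj (T.leaf y) u

end PhyloTree

/-- `T'` is the result of a type-1 cherry reduction of the cherry `[x,y]` of `T`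
(delete leaf `x`, suppress the resulting degree-2 vertex), characterized via the
split systems (by Buneman's theorem this determines `T'` uniquely). -/
def IsRed1 {X : Type*} (T : PhyloTree X) (x y : X)
    (T' : PhyloTree {z : X // z ≠ x}) : Prop :=
  T.IsCherry x y ∧
  (fun S : Set {z : X // z ≠ x} => Subtype.val '' S) '' T'.splits =
    {S : Set X | ∃ S' ∈ T.splits, S = S' \ {x}} \ {∅, ({x} : Set X)ᶜ}

/-- `T'` is the result of a type-2 cherry reduction of the cherry `[x,y]` of `T`
(delete leaves `x` and `y` and their common neighbor, suppress the resulting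
degree-2 vertex), characterized via the split systems. -/
def IsRed2 {X : Type*} (T : PhyloTree X) (x y : X)
    (T' : PhyloTree {z : X // z ≠ x ∧ z ≠ y}) : Prop :=
  T.IsCherry x y ∧
  (fun S : Set {z : X // z ≠ x ∧ z ≠ y} => Subtype.val '' S) '' T'.splits =
    {S : Set X | ∃ S' ∈ T.splits, S = S' \ {x, y}} \ {∅, ({x, y} : Set X)ᶜ}

/-- `T'` is an NNI neighbor of `T`: there is an inner edge `{u,v}` of `T`, with
the four subtrees hanging off `u` (via `a₁`, `a₂`) and `v` (via `b₁`, `b₂`),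
such that `T'` arises by exchanging the subtree at `a₂` with the one at `b₂`;
characterized via split systems. -/
def IsNNINeighbor {X : Type*} (T T' : PhyloTree X) : Prop :=
  ∃ u v a₁ a₂ b₁ b₂ : T.V,
    T.G.Adj u v ∧ T.G.Adj u a₁ ∧ T.G.Adj u a₂ ∧ T.G.Adj v b₁ ∧ T.G.Adj v b₂ ∧
    a₁ ≠ a₂ ∧ a₁ ≠ v ∧ a₂ ≠ v ∧ b₁ ≠ b₂ ∧ b₁ ≠ u ∧ b₂ ≠ u ∧
    T'.splits = (T.splits \ {T.side u v, T.side v u}) ∪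
      {T.side a₁ u ∪ T.side b₂ v, T.side a₂ u ∪ T.side b₁ v}

/-- An `A`-`B`-path in a graph `G`: a path from a vertex of `A` to a vertex of `B`
none of whose interior vertices lies in `A` or `B`. -/
structure ABPath {V : Type*} (G : SimpleGraph V) (A B : Set V) where
  first : V
  last : V
  walk : G.Walk first last
  isPath : walk.IsPath
  first_mem : first ∈ A
  last_mem : last ∈ B
  interior_not_mem : ∀ v ∈ walk.support.tail.dropLast, v ∉ A ∧ v ∉ B

/-- `S` separates `A` from `B` in `G`: every `A`-`B`-path meets `S`. -/
def IsSeparator {V : Type*} (G : SimpleGraph V) (A B S : Set V) : Prop :=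
  ∀ P : ABPath G A B, ∃ v ∈ P.walk.support, v ∈ S


namespace PhyloTree
variable {X : Type*}

lemma changing_comp (T T' : PhyloTree X) (φ : T.G ≃g T'.G) (g : T'.V → Bool) :
    T.changingNumber (g ∘ φ) = T'.changingNumber g := by
  have hinj : Function.Injective (Sym2.map (φ : T.V → T'.V)) :=
    Sym2.map.injective φ.injective
  have himg : Sym2.map (φ : T.V → T'.V) '' {e ∈ T.G.edgeSet | ¬ (Sym2.map (g ∘ φ) e).IsDiag}
      = {e ∈ T'.G.edgeSet | ¬ (Sym2.map g e).IsDiag} := by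
    ext e'
    constructor
    · rintro ⟨e, ⟨he, hd⟩, rfl⟩
      refine ⟨φ.map_mem_edgeSet_iff.2 he, ?_⟩
      rwa [Sym2.map_map]
    · rintro ⟨he, hd⟩
      refine ⟨Sym2.map (φ.symm : T'.V → T.V) e', ⟨?_, ?_⟩, ?_⟩
      · rw [← φ.symm.map_mem_edgeSet_iff] at he
        exact he
      · rw [Sym2.map_map]
        have : (g ∘ ⇑φ) ∘ ⇑φ.symm = g := by
          funext v; simp
        rw [this]
        exact hd
      · rw [Sym2.map_map]
        have : (φ : T.V → T'.V) ∘ (φ.symm : T'.V → T.V) = id := by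
          funext v; simp
        rw [this, Sym2.map_id]; rfl
  unfold changingNumber
  rw [← himg, Set.ncard_image_of_injective _ hinj]

lemma parsimony_eq_of_iso {T T' : PhyloTree X} (h : T.Isomorphic T') (f : X → Bool) :
    T.parsimony f = T'.parsimony f := by
  obtain ⟨φ, hφ⟩ := h
  unfold parsimony
  congr 1
  ext n
  constructor
  · rintro ⟨g, hg, rfl⟩
    refine ⟨g ∘ φ.symm, fun x => ?_, ?_⟩
    · simp only [Function.comp_apply, ← hφ x, RelIso.symm_apply_apply]
      exact hg x
    · rw [← changing_comp T T' φ (g ∘ ⇑φ.symm)]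
      congr 1
      funext v; simp
  · rintro ⟨g, hg, rfl⟩
    exact ⟨g ∘ φ, fun x => by simp [Function.comp_apply, hφ x, hg x],
      changing_comp T T' φ g⟩


lemma reach_aux (T : PhyloTree X) (u v : T.V) {a b : T.V} (p : T.G.Walk a b) :
    (T.G.deleteEdges {s(u,v)}).Reachable a b ∨
      ((T.G.deleteEdges {s(u,v)}).Reachable a u ∨ (T.G.deleteEdges {s(u,v)}).Reachable a v) := by
  induction p with
  | nil => exact Or.inl (Reachable.refl _)
  | @cons a c b h p ih =>
    by_cases he : s(a, c) = s(u, v)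
    · rw [Sym2.eq_iff] at he
      rcases he with ⟨rfl, rfl⟩ | ⟨rfl, rfl⟩
      · exact Or.inr (Or.inl (Reachable.refl _))
      · exact Or.inr (Or.inr (Reachable.refl _))
    · have hadj : (T.G.deleteEdges {s(u,v)}).Adj a c := by
        rw [deleteEdges_adj]; exact ⟨h, by simpa using he⟩
      rcases ih with h1 | h1 | h1
      · exact Or.inl (hadj.reachable.trans h1)
      · exact Or.inr (Or.inl (hadj.reachable.trans h1))
      · exact Or.inr (Or.inr (hadj.reachable.trans h1))

lemma reach_side (T : PhyloTree X) (u v w : T.V) :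
    (T.G.deleteEdges {s(u,v)}).Reachable w u ∨ (T.G.deleteEdges {s(u,v)}).Reachable w v := by
  obtain ⟨p⟩ := T.isTree.isConnected.preconnected w u
  rcases T.reach_aux u v p with h | h | h
  · exact Or.inl h
  · exact Or.inl h
  · exact Or.inr h

lemma not_reach_of_adj (T : PhyloTree X) {u v : T.V} (h : T.G.Adj u v) :
    ¬ (T.G.deleteEdges {s(u,v)}).Reachable u v := by
  have hb : T.G.IsBridge s(u, v) :=
    (isAcyclic_iff_forall_adj_isBridge.1 T.isTree.IsAcyclic) h
  exact hb

lemma side_union (T : PhyloTree X) (u v : T.V) :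
    T.side u v ∪ T.side v u = Set.univ := by
  ext x
  simp only [Set.mem_union, Set.mem_univ, iff_true, side, Set.mem_setOf_eq]
  have := T.reach_side u v (T.leaf x)
  rcases this with h | h
  · exact Or.inl h
  · right
    rw [Sym2.eq_swap]
    exact h

lemma side_disjoint (T : PhyloTree X) {u v : T.V} (h : T.G.Adj u v) :
    T.side u v ∩ T.side v u = ∅ := by
  ext x
  simp only [Set.mem_inter_iff, Set.mem_empty_iff_false, iff_false, not_and, side,
    Set.mem_setOf_eq]
  intro h1 h2
  rw [Sym2.eq_swap] at h2
  exact T.not_reach_of_adj h (h1.symm.trans h2)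

lemma mem_side_iff (T : PhyloTree X) {u v : T.V} (h : T.G.Adj u v) (x : X) :
    x ∈ T.side u v ↔ x ∉ T.side v u := by
  constructor
  · intro h1 h2
    have := T.side_disjoint h
    rw [Set.eq_empty_iff_forall_notMem] at this
    exact this x ⟨h1, h2⟩
  · intro h1
    have := T.side_union u v
    have hx : x ∈ T.side u v ∪ T.side v u := by rw [this]; trivial
    rcases hx with hx | hx
    · exact hx
    · exact absurd hx h1

/-! ### constancy along reachability avoiding changing edges -/

lemma eq_of_reach (T : PhyloTree X) (g : T.V → Bool) (E : Set (Sym2 T.V))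
    (hE : ∀ a b : T.V, T.G.Adj a b → s(a,b) ∉ E → g a = g b) {a b : T.V}
    (hr : (T.G.deleteEdges E).Reachable a b) : g a = g b := by
  obtain ⟨p⟩ := hr
  induction p with
  | nil => rfl
  | @cons a c b h p ih =>
    rw [deleteEdges_adj] at h
    exact (hE a c h.1 h.2).trans ih

lemma changing_spec (T : PhyloTree X) (g : T.V → Bool) {a b : T.V} (h : T.G.Adj a b) :
    s(a,b) ∈ {e ∈ T.G.edgeSet | ¬ (Sym2.map g e).IsDiag} ↔ g a ≠ g b := by
  simp [h, Sym2.isDiag_iff_proj_eq]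

lemma changing_finite (T : PhyloTree X) (g : T.V → Bool) :
    {e ∈ T.G.edgeSet | ¬ (Sym2.map g e).IsDiag}.Finite := by
  haveI := T.fintypeV
  exact Set.toFinite _

lemma exists_leaf_reach (T : PhyloTree X) {u v : T.V} (h : T.G.Adj u v) :
    ∃ x : X, (T.G.deleteEdges {s(u,v)}).Reachable (T.leaf x) u := by
  haveI := T.fintypeV
  classical
  set G' := T.G.deleteEdges {s(u,v)} with hG'
  set L : Set ℕ := {n | ∃ (w : T.V) (p : G'.Walk w u), p.IsPath ∧ p.length = n} with hL
  have hne : L.Nonempty := ⟨0, u, Walk.nil, by simp, rfl⟩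
  have hbdd : BddAbove L := by
    refine ⟨Fintype.card T.V, fun n hn => ?_⟩
    obtain ⟨w, p, hp, rfl⟩ := hn
    exact hp.length_lt.le
  obtain ⟨w, p, hp, hlen⟩ := Nat.sSup_mem hne hbdd
  suffices hx : ∃ x, T.leaf x = w by
    obtain ⟨x, rfl⟩ := hx; exact ⟨x, ⟨p⟩⟩
  rw [← T.leaf_iff]
  by_contra hwl
  have hdeg : (T.G.neighborSet w).ncard = 3 := by
    rcases T.binary w with h1 | h1
    · exact absurd (by omega : (T.G.neighborSet w).ncard ≤ 1) hwl
    · exact h1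
  -- G' has at least two neighbors of w
  have hsub : T.G.neighborSet w \ G'.neighborSet w ⊆ {if w = u then v else u} := by
    intro z hz
    obtain ⟨hz1, hz2⟩ := hz
    have hadj : ¬ (G'.Adj w z) := hz2
    rw [hG', deleteEdges_adj] at hadj
    push_neg at hadj
    have he := hadj hz1
    simp only [Set.mem_singleton_iff] at he
    rw [Sym2.eq_iff] at he
    rcases he with ⟨h1, h2⟩ | ⟨h1, h2⟩
    · simp [Set.mem_singleton_iff, h1, h2]
    · have hne' : w ≠ u := fun hh => h.ne (hh.symm.trans h1)
      simp [Set.mem_singleton_iff, h2, hne']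
  have hsub2 : G'.neighborSet w ⊆ T.G.neighborSet w := by
    intro z hz
    simp only [hG', mem_neighborSet, deleteEdges_adj] at hz
    exact hz.1
  have h2 : 1 < (G'.neighborSet w).ncard := by
    have hu : T.G.neighborSet w ⊆ G'.neighborSet w ∪ (T.G.neighborSet w \ G'.neighborSet w) := by
      intro z hz
      by_cases hz' : z ∈ G'.neighborSet w
      · exact Or.inl hz'
      · exact Or.inr ⟨hz, hz'⟩
    have hc1 := Set.ncard_le_ncard hu (Set.toFinite _)
    have hc2 := Set.ncard_union_le (G'.neighborSet w) (T.G.neighborSet w \ G'.neighborSet w)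
    have hc3 := Set.ncard_le_ncard hsub (Set.toFinite _)
    simp only [Set.ncard_singleton] at hc3
    omega
  obtain ⟨z₁, z₂, hz₁, hz₂, hzne⟩ := (Set.one_lt_ncard_iff (Set.toFinite _)).1 h2
  have hmem : ∀ z, G'.Adj w z → z ∈ p.support := by
    intro z hz
    by_contra hns
    have hmem' : p.length + 1 ∈ L := by
      refine ⟨z, Walk.cons hz.symm p, ?_, by simp⟩
      rw [Walk.cons_isPath_iff]
      exact ⟨hp, hns⟩
    have := le_csSup hbdd hmem'
    omega
  have hsecond : ∀ z, G'.Adj w z → z ∈ p.support → p.getVert 1 = z := by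
    intro z hz hzs
    have hq : (p.takeUntil z hzs).IsPath := hp.takeUntil hzs
    have hle : G' ≤ T.G := by rw [hG']; exact deleteEdges_le _
    have hqG : ((p.takeUntil z hzs).mapLe hle).IsPath := hq.mapLe hle
    have hadjG : T.G.Adj w z := hle hz
    have hun := isAcyclic_iff_path_unique.1 T.isTree.IsAcyclic
      (⟨_, hqG⟩ : T.G.Path w z) (Path.singleton hadjG)
    have hlen1 : (p.takeUntil z hzs).length = 1 := by
      have := congrArg (fun P : T.G.Path w z => P.1.length) hun
      simpa [Path.singleton, Walk.length_map] using this
    have hspec := p.take_spec hzs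
    have := congrArg (fun q => Walk.getVert q 1) hspec
    simp only [Walk.getVert_append, hlen1] at this
    rw [← this]
    simp [Walk.getVert_zero]
  have e1 := hsecond z₁ hz₁ (hmem z₁ hz₁)
  have e2 := hsecond z₂ hz₂ (hmem z₂ hz₂)
  exact hzne (e1 ▸ e2 ▸ rfl)

lemma side_nonempty (T : PhyloTree X) {u v : T.V} (h : T.G.Adj u v) :
    (T.side u v).Nonempty := by
  obtain ⟨x, hx⟩ := T.exists_leaf_reach h
  exact ⟨x, hx⟩

/-! ### parsimony basics -/

lemma exists_extension (T : PhyloTree X) (f : X → Bool) :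
    ∃ g : T.V → Bool, ∀ x, g (T.leaf x) = f x := by
  classical
  refine ⟨fun w => if h : ∃ x, T.leaf x = w then f h.choose else false, fun x => ?_⟩
  have h : ∃ y, T.leaf y = T.leaf x := ⟨x, rfl⟩
  simp only [dif_pos h]
  congr 1
  exact T.leaf_inj h.choose_spec

lemma parsimony_witness (T : PhyloTree X) (f : X → Bool) :
    ∃ g : T.V → Bool, (∀ x, g (T.leaf x) = f x) ∧ T.changingNumber g = T.parsimony f := by
  obtain ⟨g, hg⟩ := T.exists_extension f
  have : T.parsimony f ∈ {n : ℕ | ∃ g : T.V → Bool,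
      (∀ x : X, g (T.leaf x) = f x) ∧ T.changingNumber g = n} :=
    Nat.sInf_mem ⟨T.changingNumber g, g, hg, rfl⟩
  exact this

lemma parsimony_le (T : PhyloTree X) (f : X → Bool) (g : T.V → Bool)
    (hg : ∀ x, g (T.leaf x) = f x) : T.parsimony f ≤ T.changingNumber g :=
  Nat.sInf_le ⟨g, hg, rfl⟩

lemma eq_of_changing_subset (T : PhyloTree X) (g : T.V → Bool) (E : Set (Sym2 T.V))
    (hE : {e ∈ T.G.edgeSet | ¬ (Sym2.map g e).IsDiag} ⊆ E) {a b : T.V}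
    (hr : (T.G.deleteEdges E).Reachable a b) : g a = g b := by
  refine T.eq_of_reach g E (fun c d hcd hne => ?_) hr
  by_contra hgne
  exact hne (hE ((T.changing_spec g hcd).2 hgne))

/-! ### characterization of parsimony score one -/

lemma parsimony_eq_one_of_side (T : PhyloTree X) {u v : T.V} (h : T.G.Adj u v)
    (f : X → Bool) (hf : ∀ x, f x = true ↔ x ∈ T.side u v) : T.parsimony f = 1 := by
  classical
  set G' := T.G.deleteEdges {s(u,v)} with hG'
  set g : T.V → Bool := fun w => decide (G'.Reachable w u) with hg
  have hext : ∀ x, g (T.leaf x) = f x := by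
    intro x
    by_cases hx : x ∈ T.side u v
    · have : f x = true := (hf x).2 hx
      rw [this, hg]
      simpa using (show G'.Reachable (T.leaf x) u from hx)
    · have : f x = false := by
        cases hfx : f x
        · rfl
        · exact absurd ((hf x).1 hfx) hx
      rw [this, hg]
      simpa using (show ¬ G'.Reachable (T.leaf x) u from hx)
  have hchange : {e ∈ T.G.edgeSet | ¬ (Sym2.map g e).IsDiag} = {s(u,v)} := by
    ext e
    induction e with
    | _ a b =>
      simp only [Set.mem_setOf_eq, Set.mem_singleton_iff, mem_edgeSet, Sym2.map_pair_eq,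
        Sym2.isDiag_iff_proj_eq]
      constructor
      · rintro ⟨hab, hnd⟩
        by_contra hne
        have hadj : G'.Adj a b := by
          rw [hG', deleteEdges_adj]
          exact ⟨hab, by simpa using hne⟩
        have hiff : G'.Reachable a u ↔ G'.Reachable b u :=
          ⟨fun hh => hadj.symm.reachable.trans hh, fun hh => hadj.reachable.trans hh⟩
        refine hnd ?_
        show decide (G'.Reachable a u) = decide (G'.Reachable b u)
        exact decide_eq_decide.mpr hiff
      · intro he
        rw [Sym2.eq_iff] at he
        have htrue : g u = true := by
          show decide (G'.Reachable u u) = true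
          exact decide_eq_true (Reachable.refl u)
        have hfalse : g v = false := by
          show decide (G'.Reachable v u) = false
          exact decide_eq_false (fun hr => T.not_reach_of_adj h hr.symm)
        rcases he with ⟨h1, h2⟩ | ⟨h1, h2⟩
        · subst h1; subst h2
          exact ⟨h, by rw [htrue, hfalse]; simp⟩
        · subst h1; subst h2
          exact ⟨h.symm, by rw [htrue, hfalse]; simp⟩
  have h1 : T.changingNumber g = 1 := by
    rw [changingNumber, hchange, Set.ncard_singleton]
  have hle : T.parsimony f ≤ 1 := h1 ▸ T.parsimony_le f g hext
  have hne0 : T.parsimony f ≠ 0 := by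
    intro h0
    obtain ⟨g₀, hg₀, hcn⟩ := T.parsimony_witness f
    rw [h0] at hcn
    have hempty : {e ∈ T.G.edgeSet | ¬ (Sym2.map g₀ e).IsDiag} = ∅ :=
      (Set.ncard_eq_zero (T.changing_finite g₀)).1 hcn
    obtain ⟨x, hx⟩ := T.side_nonempty h
    obtain ⟨y, hy⟩ := T.side_nonempty h.symm
    have hxy : g₀ (T.leaf x) = g₀ (T.leaf y) := by
      refine T.eq_of_changing_subset g₀ ∅ (by rw [hempty]) ?_
      rw [deleteEdges_empty]
      exact T.isTree.isConnected.preconnected _ _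
    have hfx : f x = true := (hf x).2 hx
    have hfy : f y = false := by
      cases hfy : f y
      · rfl
      · have := (hf y).1 hfy
        rw [T.mem_side_iff h] at this
        exact absurd hy this
    rw [hg₀ x, hg₀ y, hfx, hfy] at hxy
    simp at hxy
  omega

lemma exists_side_of_parsimony_one (T : PhyloTree X) (f : X → Bool)
    (hf : T.parsimony f = 1) :
    ∃ u v : T.V, T.G.Adj u v ∧ {x | f x = true} = T.side u v := by
  obtain ⟨g, hg, hcn⟩ := T.parsimony_witness f
  rw [hf] at hcn
  obtain ⟨e₀, he₀⟩ := (Set.ncard_eq_one).1 hcn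
  have he₀mem : e₀ ∈ {e ∈ T.G.edgeSet | ¬ (Sym2.map g e).IsDiag} := by
    rw [he₀]; rfl
  have hconst : ∀ a b : T.V, (T.G.deleteEdges {e₀}).Reachable a b → g a = g b := by
    intro a b hr
    exact T.eq_of_changing_subset g {e₀} (by rw [he₀]) hr
  obtain ⟨a, b⟩ := e₀
  obtain ⟨hab, hnd⟩ := he₀mem
  rw [mem_edgeSet] at hab
  simp only [Sym2.map_pair_eq, Sym2.isDiag_iff_proj_eq] at hnd
  -- orient so that g is true on the `u`-side
  have main : ∀ u v : T.V, T.G.Adj u v → g u = true → g v = false →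
      s(u, v) = s(a, b) → {x | f x = true} = T.side u v := by
    intro u v huv hgu hgv hedge
    ext x
    simp only [Set.mem_setOf_eq, side, ← hg x]
    rcases T.reach_side u v (T.leaf x) with hr | hr
    · have hr2 := hr
      rw [hedge] at hr2
      have hgx : g (T.leaf x) = true := (hconst _ _ hr2).trans hgu
      rw [hgx]
      exact ⟨fun _ => hr, fun _ => rfl⟩
    · have hr2 := hr
      rw [hedge] at hr2
      have hgx : g (T.leaf x) = false := (hconst _ _ hr2).trans hgv
      rw [hgx]
      exact ⟨fun hh => absurd hh (by simp),
        fun hh => absurd (hh.symm.trans hr) (T.not_reach_of_adj huv)⟩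
  cases hga : g a with
  | false =>
    have hgb : g b = true := by
      cases hgb : g b
      · rw [hga, hgb] at hnd; exact absurd rfl hnd
      · rfl
    exact ⟨b, a, hab.symm, main b a hab.symm hgb hga (by rw [Sym2.eq_swap])⟩
  | true =>
    have hgb : g b = false := by
      cases hgb : g b
      · rfl
      · rw [hga, hgb] at hnd; exact absurd rfl hnd
    exact ⟨a, b, hab, main a b hab hga hgb rfl⟩

lemma mem_Ak_one_iff (T : PhyloTree X) (f : X → Bool) :
    f ∈ T.Ak 1 ↔ {x | f x = true} ∈ T.splits := by
  constructor
  · intro hf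
    obtain ⟨u, v, huv, hS⟩ := T.exists_side_of_parsimony_one f hf
    exact ⟨u, v, huv, hS⟩
  · rintro ⟨u, v, huv, hS⟩
    refine T.parsimony_eq_one_of_side huv f fun x => ?_
    constructor
    · intro hx
      rw [← hS]; exact hx
    · intro hx
      have : x ∈ {x | f x = true} := hS ▸ hx
      exact this

lemma splits_subset_of_Ak_one (T T' : PhyloTree X) (h : T.Ak 1 = T'.Ak 1) :
    T.splits ⊆ T'.splits := by
  classical
  intro S hS
  set f : X → Bool := fun x => decide (x ∈ S) with hf
  have hSf : {x | f x = true} = S := by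
    ext x; simp [hf]
  have h1 : f ∈ T.Ak 1 := (T.mem_Ak_one_iff f).2 (hSf ▸ hS)
  rw [h] at h1
  have := (T'.mem_Ak_one_iff f).1 h1
  rwa [hSf] at this

lemma splits_eq_of_Ak_one (T T' : PhyloTree X) (h : T.Ak 1 = T'.Ak 1) :
    T.splits = T'.splits :=
  le_antisymm (T.splits_subset_of_Ak_one T' h) (T'.splits_subset_of_Ak_one T h.symm)

/-! ### vertex-level side machinery -/

lemma reach_of_mem_support (T : PhyloTree X) {H : SimpleGraph T.V} {a b w : T.V}
    (p : H.Walk a b) (hw : w ∈ p.support) : H.Reachable w b := by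
  classical
  exact ⟨p.dropUntil w hw⟩

/-- Workhorse: a walk avoiding `S₀` whose target is not `S₀`-reachable from `z`
also avoids every edge incident to `z`, so it transfers to `G ∖ E` whenever every
edge of `E` contains `z` or belongs to `S₀`. -/
lemma reach_del_mono (T : PhyloTree X) (S₀ E : Set (Sym2 T.V)) {w₁ a z : T.V}
    (hr : (T.G.deleteEdges S₀).Reachable w₁ a)
    (hz : ¬ (T.G.deleteEdges S₀).Reachable z a)
    (hE : ∀ e ∈ E, z ∈ e ∨ e ∈ S₀) :
    (T.G.deleteEdges E).Reachable w₁ a := by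
  obtain ⟨p⟩ := hr
  have hzs : z ∉ p.support := fun hw => hz (T.reach_of_mem_support p hw)
  refine ⟨p.transfer _ (fun e he => ?_)⟩
  have h1 : e ∈ (T.G.deleteEdges S₀).edgeSet := p.edges_subset_edgeSet he
  rw [edgeSet_deleteEdges] at h1
  rw [edgeSet_deleteEdges]
  refine ⟨h1.1, fun heE => ?_⟩
  rcases hE e heE with hze | hS₀
  · induction e with
    | _ c d =>
      rcases Sym2.mem_iff.1 hze with rfl | rfl
      · exact hzs (p.fst_mem_support_of_mem_edges he)
      · exact hzs (p.snd_mem_support_of_mem_edges he)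
  · exact h1.2 hS₀

/-- If `w₁` lies on the `c`-side of the edge `cu`, it stays on that side even
after deleting any set of edges incident to `u` (plus the edge `cu`). -/
lemma vside_subset (T : PhyloTree X) {u c z : T.V} (huc : T.G.Adj u c) (huz : T.G.Adj u z)
    (hcz : c ≠ z) {w₁ : T.V}
    (hr : (T.G.deleteEdges {s(c,u)}).Reachable w₁ c) :
    (T.G.deleteEdges {s(u,z)}).Reachable w₁ u := by
  have hz : ¬ (T.G.deleteEdges {s(c,u)}).Reachable u c := by
    have := T.not_reach_of_adj huc
    rw [show s(u,c) = s(c,u) from Sym2.eq_swap] at this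
    exact this
  have h1 : (T.G.deleteEdges {s(u,z)}).Reachable w₁ c :=
    T.reach_del_mono {s(c,u)} {s(u,z)} hr hz (by
      intro e he
      rw [Set.mem_singleton_iff] at he
      subst he
      exact Or.inl (Sym2.mem_mk_left u z))
  have hadj : (T.G.deleteEdges {s(u,z)}).Adj c u := by
    rw [deleteEdges_adj]
    refine ⟨huc.symm, ?_⟩
    rw [Set.mem_singleton_iff, Sym2.eq_iff]
    push_neg
    exact ⟨fun hcu => absurd (hcu ▸ huc) (T.G.irrefl), fun hcz' _ => hcz hcz'⟩
  exact h1.trans hadj.reachable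

lemma side_subset_side (T : PhyloTree X) {u c z : T.V} (huc : T.G.Adj u c)
    (huz : T.G.Adj u z) (hcz : c ≠ z) : T.side c u ⊆ T.side u z := by
  intro x hx
  exact T.vside_subset huc huz hcz hx

/-- Every vertex `w ≠ u` lies strictly on the side of some neighbor of `u`. -/
lemma reach_to_neighbor (T : PhyloTree X) {w u : T.V} (hne : w ≠ u) :
    ∃ n, T.G.Adj u n ∧ (T.G.deleteEdges {s(n,u)}).Reachable w n := by
  classical
  obtain ⟨p₀⟩ := T.isTree.isConnected.preconnected w u
  obtain ⟨p, hp⟩ := p₀.toPath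
  rcases hq : p.reverse with _ | ⟨hadj, q⟩
  · exact absurd rfl hne
  · rename_i n
    refine ⟨n, hadj, ?_⟩
    have hrp : p.reverse.IsPath := hp.reverse
    rw [hq] at hrp
    have hnodup : (Walk.cons hadj q).edges.Nodup := hrp.isTrail.edges_nodup
    rw [Walk.edges_cons] at hnodup
    have hnotmem : s(u, n) ∉ q.edges := (List.nodup_cons.1 hnodup).1
    refine ⟨(q.reverse).transfer _ (fun e he => ?_)⟩
    rw [Walk.edges_reverse, List.mem_reverse] at he
    rw [edgeSet_deleteEdges]
    refine ⟨q.edges_subset_edgeSet he, ?_⟩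
    rw [Set.mem_singleton_iff]
    rintro rfl
    rw [Sym2.eq_swap] at hnotmem
    exact hnotmem he

lemma vside_disjoint (T : PhyloTree X) {u n₁ n₂ w : T.V} (h₁ : T.G.Adj u n₁)
    (h₂ : T.G.Adj u n₂) (hne : n₁ ≠ n₂)
    (hw₁ : (T.G.deleteEdges {s(n₁,u)}).Reachable w n₁)
    (hw₂ : (T.G.deleteEdges {s(n₂,u)}).Reachable w n₂) : False := by
  have hsub := T.vside_subset h₁ h₂ hne hw₁
  -- `w` reaches `u` avoiding `s(u,n₂)`, and reaches `n₂` avoiding `s(n₂,u)`;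
  -- together `u` reaches `n₂` avoiding the edge, contradiction
  have h2 : (T.G.deleteEdges {s(u,n₂)}).Reachable w n₂ := by
    rw [show s(u,n₂) = s(n₂,u) from Sym2.eq_swap]
    exact hw₂
  exact T.not_reach_of_adj h₂ (hsub.symm.trans h2)

lemma adj_of_mem_neighborSet (T : PhyloTree X) {u n : T.V}
    (h : n ∈ T.G.neighborSet u) : T.G.Adj u n := h

lemma neighbors_of_internal (T : PhyloTree X) {u v : T.V} (huv : T.G.Adj u v)
    (h3 : (T.G.neighborSet u).ncard = 3) :
    ∃ c d, c ≠ v ∧ d ≠ v ∧ c ≠ d ∧ T.G.neighborSet u = {v, c, d} := by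
  haveI := T.fintypeV
  have hv : v ∈ T.G.neighborSet u := huv
  have h2 : (T.G.neighborSet u \ {v}).ncard = 2 := by
    rw [Set.ncard_diff_singleton_of_mem hv, h3]
  obtain ⟨c, d, hcd, hset⟩ := Set.ncard_eq_two.1 h2
  have hc : c ∈ T.G.neighborSet u \ {v} := by rw [hset]; exact Set.mem_insert _ _
  have hd : d ∈ T.G.neighborSet u \ {v} := by
    rw [hset]; exact Set.mem_insert_of_mem _ rfl
  refine ⟨c, d, hc.2, hd.2, hcd, ?_⟩
  have : T.G.neighborSet u = insert v (T.G.neighborSet u \ {v}) := by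
    rw [Set.insert_diff_singleton, Set.insert_eq_of_mem hv]
  rw [this, hset]

lemma not_leaf_of_internal (T : PhyloTree X) {u : T.V}
    (h3 : (T.G.neighborSet u).ncard = 3) (x : X) : T.leaf x ≠ u := by
  intro h
  have := (T.leaf_iff u).2 ⟨x, h⟩
  omega

lemma side_eq_union (T : PhyloTree X) {u v c d : T.V} (huv : T.G.Adj u v)
    (hN : T.G.neighborSet u = {v, c, d}) (hvc : c ≠ v) (hvd : d ≠ v) (hcd : c ≠ d) :
    T.side u v = T.side c u ∪ T.side d u := by
  have huc : T.G.Adj u c := T.adj_of_mem_neighborSet (by rw [hN]; simp)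
  have hud : T.G.Adj u d := T.adj_of_mem_neighborSet (by rw [hN]; simp)
  have h3 : (T.G.neighborSet u).ncard = 3 := by
    rw [hN]
    rw [Set.ncard_insert_of_notMem (by simp [hvc.symm, hvd.symm]),
      Set.ncard_insert_of_notMem (by simp [hcd]), Set.ncard_singleton]
  apply Set.Subset.antisymm
  · intro x hx
    have hlx : T.leaf x ≠ u := T.not_leaf_of_internal h3 x
    obtain ⟨n, hn, hrn⟩ := T.reach_to_neighbor hlx
    have hnN : n ∈ ({v, c, d} : Set T.V) := by rw [← hN]; exact hn
    rcases hnN with rfl | rfl | rfl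
    · exfalso
      exact (T.mem_side_iff huv x).1 hx hrn
    · exact Or.inl hrn
    · exact Or.inr hrn
  · intro x hx
    rcases hx with hx | hx
    · exact T.side_subset_side huc huv hvc hx
    · exact T.side_subset_side hud huv hvd hx

lemma side_disjoint_at (T : PhyloTree X) {u c d : T.V} (huc : T.G.Adj u c)
    (hud : T.G.Adj u d) (hcd : c ≠ d) : T.side c u ∩ T.side d u = ∅ := by
  ext x
  simp only [Set.mem_inter_iff, Set.mem_empty_iff_false, iff_false, not_and]
  intro h1 h2
  exact T.vside_disjoint huc hud hcd h1 h2

lemma side_leaf (T : PhyloTree X) {x : X} {v : T.V} (h : T.G.Adj (T.leaf x) v) :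
    T.side (T.leaf x) v = {x} := by
  have hN : T.G.neighborSet (T.leaf x) = {v} := by
    have hle : (T.G.neighborSet (T.leaf x)).ncard ≤ 1 := (T.leaf_iff _).2 ⟨x, rfl⟩
    have h1 : (T.G.neighborSet (T.leaf x)).ncard = 1 := by
      rcases T.binary (T.leaf x) with h' | h'
      · exact h'
      · omega
    obtain ⟨α, hα⟩ := Set.ncard_eq_one.1 h1
    have hv : v ∈ T.G.neighborSet (T.leaf x) := h
    rw [hα] at hv ⊢
    rw [Set.mem_singleton_iff] at hv
    rw [hv]
  ext y
  simp only [Set.mem_singleton_iff]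
  constructor
  · intro hy
    by_contra hne
    have hlne : T.leaf y ≠ T.leaf x := fun hh => hne (T.leaf_inj hh)
    obtain ⟨n, hn, hrn⟩ := T.reach_to_neighbor hlne
    have : n ∈ ({v} : Set T.V) := by rw [← hN]; exact hn
    rw [Set.mem_singleton_iff] at this
    rw [this] at hrn
    have hr2 : (T.G.deleteEdges {s(T.leaf x, v)}).Reachable (T.leaf y) v := by
      rw [show s(T.leaf x, v) = s(v, T.leaf x) from Sym2.eq_swap]
      exact hrn
    exact T.not_reach_of_adj h ((hy.symm.trans hr2))
  · rintro rfl
    exact Reachable.refl _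

lemma singleton_mem_splits (T : PhyloTree X) (x : X) : {x} ∈ T.splits := by
  haveI := T.fintypeV
  have h1 : (T.G.neighborSet (T.leaf x)).ncard = 1 := by
    rcases T.binary (T.leaf x) with h' | h'
    · exact h'
    · have := (T.leaf_iff (T.leaf x)).2 ⟨x, rfl⟩
      omega
  have hne : (T.G.neighborSet (T.leaf x)).Nonempty := by
    rw [← Set.ncard_pos (Set.toFinite _)]
    omega
  obtain ⟨v, hv⟩ := hne
  exact ⟨T.leaf x, v, T.adj_of_mem_neighborSet hv, (T.side_leaf (T.adj_of_mem_neighborSet hv)).symm⟩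

lemma parsimony_ne_zero (T : PhyloTree X) (f : X → Bool) {x y : X}
    (hx : f x = true) (hy : f y = false) : T.parsimony f ≠ 0 := by
  intro h0
  obtain ⟨g₀, hg₀, hcn⟩ := T.parsimony_witness f
  rw [h0] at hcn
  have hempty : {e ∈ T.G.edgeSet | ¬ (Sym2.map g₀ e).IsDiag} = ∅ :=
    (Set.ncard_eq_zero (T.changing_finite g₀)).1 hcn
  have hxy : g₀ (T.leaf x) = g₀ (T.leaf y) := by
    refine T.eq_of_changing_subset g₀ ∅ (by rw [hempty]) ?_
    rw [deleteEdges_empty]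
    exact T.isTree.isConnected.preconnected _ _
  rw [hg₀ x, hg₀ y, hx, hy] at hxy
  simp at hxy

lemma parsimony_le_two_of_union (T : PhyloTree X) {a₁ b₁ a₂ b₂ : T.V}
    (h₁ : T.G.Adj a₁ b₁) (h₂ : T.G.Adj a₂ b₂) (f : X → Bool)
    (hf : ∀ x, f x = true ↔ x ∈ T.side a₁ b₁ ∪ T.side a₂ b₂) :
    T.parsimony f ≤ 2 := by
  classical
  set g : T.V → Bool := fun w =>
    (decide ((T.G.deleteEdges {s(a₁,b₁)}).Reachable w a₁) ||
      decide ((T.G.deleteEdges {s(a₂,b₂)}).Reachable w a₂)) with hg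
  have hext : ∀ x, g (T.leaf x) = f x := by
    intro x
    have h1 : g (T.leaf x) = true ↔ f x = true := by
      rw [hf x]
      simp [hg, side, Set.mem_union]
    cases hgx : g (T.leaf x) <;> cases hfx : f x
    · rfl
    · rw [hgx, hfx] at h1; simp at h1
    · rw [hgx, hfx] at h1; simp at h1
    · rfl
  have hsub : {e ∈ T.G.edgeSet | ¬ (Sym2.map g e).IsDiag} ⊆ {s(a₁,b₁), s(a₂,b₂)} := by
    intro e he
    induction e with
    | _ p q =>
      obtain ⟨hpq, hnd⟩ := he
      rw [mem_edgeSet] at hpq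
      by_contra hmem
      simp only [Set.mem_insert_iff, Set.mem_singleton_iff] at hmem
      push_neg at hmem
      have had1 : (T.G.deleteEdges {s(a₁,b₁)}).Adj p q := by
        rw [deleteEdges_adj]; exact ⟨hpq, by simpa using hmem.1⟩
      have had2 : (T.G.deleteEdges {s(a₂,b₂)}).Adj p q := by
        rw [deleteEdges_adj]; exact ⟨hpq, by simpa using hmem.2⟩
      apply hnd
      rw [Sym2.map_pair_eq, Sym2.isDiag_iff_proj_eq]
      show g p = g q
      rw [hg]
      simp only
      congr 1
      · exact decide_eq_decide.2
          ⟨fun hh => had1.symm.reachable.trans hh, fun hh => had1.reachable.trans hh⟩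
      · exact decide_eq_decide.2
          ⟨fun hh => had2.symm.reachable.trans hh, fun hh => had2.reachable.trans hh⟩
  have hcn : T.changingNumber g ≤ 2 := by
    haveI := T.fintypeV
    calc T.changingNumber g ≤ ({s(a₁,b₁), s(a₂,b₂)} : Set (Sym2 T.V)).ncard :=
          Set.ncard_le_ncard hsub (Set.toFinite _)
      _ ≤ 2 := by
          apply le_trans (Set.ncard_insert_le _ _)
          rw [Set.ncard_singleton]
  exact le_trans (T.parsimony_le f g hext) hcn

lemma splits_subset_of_Ak_two [Fintype X] (T T' : PhyloTree X)
    (h : T.Ak 2 = T'.Ak 2) : T.splits ⊆ T'.splits := by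
  classical
  suffices H : ∀ n : ℕ, ∀ S : Set X, S ∈ T.splits → S.ncard ≤ n → S ∈ T'.splits by
    intro S hS
    exact H S.ncard S hS le_rfl
  intro n
  induction n with
  | zero =>
    rintro S ⟨u, v, huv, rfl⟩ h0
    obtain ⟨x, hx⟩ := T.side_nonempty huv
    have : 0 < (T.side u v).ncard := (Set.ncard_pos (Set.toFinite _)).2 ⟨x, hx⟩
    omega
  | succ n ih =>
    rintro S ⟨u, v, huv, rfl⟩ hle
    rcases T.binary u with h1 | h3
    · -- `u` is a leaf vertex, its side is a singleton
      obtain ⟨x, hxu⟩ := (T.leaf_iff u).1 (by omega)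
      have hadj : T.G.Adj (T.leaf x) v := by rw [hxu]; exact huv
      have : T.side u v = {x} := by rw [← hxu]; exact T.side_leaf hadj
      rw [this]
      exact T'.singleton_mem_splits x
    · obtain ⟨c, d, hcv, hdv, hcd, hN⟩ := T.neighbors_of_internal huv h3
      have huc : T.G.Adj u c := T.adj_of_mem_neighborSet (by rw [hN]; simp)
      have hud : T.G.Adj u d := T.adj_of_mem_neighborSet (by rw [hN]; simp)
      have hU : T.side u v = T.side c u ∪ T.side d u :=
        T.side_eq_union huv hN hcv hdv hcd
      have hdisj := T.side_disjoint_at huc hud hcd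
      obtain ⟨y₁, hy₁⟩ := T.side_nonempty huc.symm
      obtain ⟨y₂, hy₂⟩ := T.side_nonempty hud.symm
      have hy₂' : y₂ ∉ T.side c u := by
        intro hmem
        have : y₂ ∈ T.side c u ∩ T.side d u := ⟨hmem, hy₂⟩
        rw [hdisj] at this
        exact this
      have hy₁' : y₁ ∉ T.side d u := by
        intro hmem
        have : y₁ ∈ T.side c u ∩ T.side d u := ⟨hy₁, hmem⟩
        rw [hdisj] at this
        exact this
      have hlt1 : (T.side c u).ncard < (T.side u v).ncard := by
        refine Set.ncard_lt_ncard ⟨by rw [hU]; exact Set.subset_union_left, ?_⟩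
          (Set.toFinite _)
        intro hsup
        exact hy₂' (hsup (by rw [hU]; exact Or.inr hy₂))
      have hlt2 : (T.side d u).ncard < (T.side u v).ncard := by
        refine Set.ncard_lt_ncard ⟨by rw [hU]; exact Set.subset_union_right, ?_⟩
          (Set.toFinite _)
        intro hsup
        exact hy₁' (hsup (by rw [hU]; exact Or.inl hy₁))
      obtain ⟨p₁, q₁, hpq₁, he₁⟩ := ih (T.side c u) ⟨c, u, huc.symm, rfl⟩ (by omega)
      obtain ⟨p₂, q₂, hpq₂, he₂⟩ := ih (T.side d u) ⟨d, u, hud.symm, rfl⟩ (by omega)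
      set f : X → Bool := fun x => decide (x ∈ T.side u v) with hfdef
      have hf1 : T.parsimony f = 1 :=
        T.parsimony_eq_one_of_side huv f (by intro x; simp [hfdef])
      have hfle : T'.parsimony f ≤ 2 := by
        refine T'.parsimony_le_two_of_union hpq₁ hpq₂ f ?_
        intro x
        simp only [hfdef, decide_eq_true_eq]
        rw [← he₁, ← he₂, ← hU]
      have hne2 : T'.parsimony f ≠ 2 := by
        intro h2
        have : f ∈ T'.Ak 2 := h2
        rw [← h] at this
        have : T.parsimony f = 2 := this
        omega
      have hne0 : T'.parsimony f ≠ 0 := by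
        obtain ⟨x₀, hx₀⟩ := T.side_nonempty huv
        obtain ⟨z₀, hz₀⟩ := T.side_nonempty huv.symm
        refine T'.parsimony_ne_zero f (x := x₀) (y := z₀) (by simp [hfdef, hx₀]) ?_
        simp only [hfdef, decide_eq_false_iff_not]
        exact fun hh => (T.mem_side_iff huv z₀).1 hh hz₀
      have hone : T'.parsimony f = 1 := by omega
      obtain ⟨p, q, hpq, hSet⟩ := T'.exists_side_of_parsimony_one f hone
      refine ⟨p, q, hpq, ?_⟩
      rw [← hSet]
      ext x
      simp [hfdef]

lemma splits_eq_of_Ak_two [Fintype X] (T T' : PhyloTree X)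
    (h : T.Ak 2 = T'.Ak 2) : T.splits = T'.splits :=
  le_antisymm (splits_subset_of_Ak_two T T' h) (splits_subset_of_Ak_two T' T h.symm)

/-! ### lemmas towards Buneman reconstruction -/

lemma q_lemma (T : PhyloTree X) {u₁ u₂ n m n' : T.V}
    (hn : T.G.Adj u₁ n) (hn' : T.G.Adj u₁ n') (hne : n' ≠ n)
    (hu₂ : (T.G.deleteEdges {s(n,u₁)}).Reachable u₂ n)
    (hu₁ : (T.G.deleteEdges {s(m,u₂)}).Reachable u₁ m) :
    T.side n' u₁ ⊆ T.side m u₂ := by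
  intro x hx
  have hz : ¬ (T.G.deleteEdges {s(n',u₁)}).Reachable u₂ n' := fun hcon =>
    T.vside_disjoint hn' hn hne hcon hu₂
  have h1 : (T.G.deleteEdges {s(m,u₂)}).Reachable (T.leaf x) n' := by
    refine T.reach_del_mono {s(n',u₁)} {s(m,u₂)} hx hz ?_
    intro e he
    rw [Set.mem_singleton_iff] at he
    subst he
    exact Or.inl (Sym2.mem_mk_right m u₂)
  have hu₂n' : u₂ ≠ n' := fun hh => hz (hh ▸ Reachable.refl _)
  have hu₂u₁ : u₂ ≠ u₁ := by
    rintro rfl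
    have := T.not_reach_of_adj hn
    rw [show s(u₂,n) = s(n,u₂) from Sym2.eq_swap] at this
    exact this hu₂
  have h2 : (T.G.deleteEdges {s(m,u₂)}).Adj n' u₁ := by
    rw [deleteEdges_adj]
    refine ⟨hn'.symm, ?_⟩
    rw [Set.mem_singleton_iff, Sym2.eq_iff]
    push_neg
    constructor
    · intro _
      exact hu₂u₁.symm
    · intro h
      exact absurd h.symm hu₂n'
  exact (h1.trans h2.reachable).trans hu₁

lemma cell_transfer (T : PhyloTree X) {a b z p : T.V}
    (hz : ¬ (T.G.deleteEdges {s(a,b)}).Reachable z a)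
    {w : T.V} (hw : (T.G.deleteEdges {s(a,b)}).Reachable w a)
    (hap : (T.G.deleteEdges {s(p,z)}).Reachable a p) :
    (T.G.deleteEdges {s(p,z)}).Reachable w p := by
  have h1 : (T.G.deleteEdges {s(p,z)}).Reachable w a := by
    refine T.reach_del_mono {s(a,b)} {s(p,z)} hw hz ?_
    intro e he
    rw [Set.mem_singleton_iff] at he
    subst he
    exact Or.inl (Sym2.mem_mk_right p z)
  exact h1.trans hap

lemma beta (T : PhyloTree X) {a₁ b₁ a₂ b₂ : T.V}
    (h₁ : T.G.Adj a₁ b₁) (h₂ : T.G.Adj a₂ b₂)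
    (hdisj : T.side a₁ b₁ ∩ T.side a₂ b₂ = ∅)
    (hout : ∃ x, x ∉ T.side a₁ b₁ ∧ x ∉ T.side a₂ b₂) :
    (T.G.deleteEdges {s(a₁,b₁)}).Reachable a₂ b₁ ∧
      (T.G.deleteEdges {s(a₁,b₁)}).Reachable b₂ b₁ := by
  have hne : s(a₁,b₁) ≠ s(a₂,b₂) := by
    intro he
    rw [Sym2.eq_iff] at he
    rcases he with ⟨rfl, rfl⟩ | ⟨rfl, rfl⟩
    · obtain ⟨x₀, hx₀⟩ := T.side_nonempty h₁
      have : x₀ ∈ T.side a₁ b₁ ∩ T.side a₁ b₁ := ⟨hx₀, hx₀⟩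
      rw [hdisj] at this
      exact this
    · obtain ⟨x, hx1, hx2⟩ := hout
      exact hx2 ((T.mem_side_iff h₁.symm x).2 hx1)
  have hadj' : (T.G.deleteEdges {s(a₁,b₁)}).Adj a₂ b₂ := by
    rw [deleteEdges_adj]
    refine ⟨h₂, ?_⟩
    rw [Set.mem_singleton_iff]
    exact fun hh => hne hh.symm
  rcases T.reach_side a₁ b₁ a₂ with hca | hcb
  · exfalso
    obtain ⟨x₂, hx₂⟩ := T.side_nonempty h₂
    have hx₂S₁ : x₂ ∉ T.side a₁ b₁ := by
      intro hmem
      have : x₂ ∈ T.side a₁ b₁ ∩ T.side a₂ b₂ := ⟨hmem, hx₂⟩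
      rw [hdisj] at this
      exact this
    have hz : ¬ (T.G.deleteEdges {s(a₁,b₁)}).Reachable a₂ b₁ := fun hcon =>
      T.not_reach_of_adj h₁ (hca.symm.trans hcon)
    have memb : ∀ y : X, y ∉ T.side a₁ b₁ →
        (T.G.deleteEdges {s(a₂,b₂)}).Reachable (T.leaf y) b₁ := by
      intro y hy
      have hy' : y ∈ T.side b₁ a₁ := (T.mem_side_iff h₁.symm y).2 hy
      have hy'' : (T.G.deleteEdges {s(a₁,b₁)}).Reachable (T.leaf y) b₁ := by
        have := hy'
        rw [side, Set.mem_setOf_eq,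
          show s(b₁,a₁) = s(a₁,b₁) from Sym2.eq_swap] at this
        exact this
      refine T.reach_del_mono {s(a₁,b₁)} {s(a₂,b₂)} hy'' hz ?_
      intro e he
      rw [Set.mem_singleton_iff] at he
      subst he
      exact Or.inl (Sym2.mem_mk_left a₂ b₂)
    have hb₁a₂ : (T.G.deleteEdges {s(a₂,b₂)}).Reachable b₁ a₂ :=
      (memb x₂ hx₂S₁).symm.trans hx₂
    obtain ⟨x, hx1, hx2⟩ := hout
    exact hx2 ((memb x hx1).trans hb₁a₂)
  · exact ⟨hcb, hadj'.symm.reachable.trans hcb⟩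

lemma side_inj_aux (T : PhyloTree X) {u v u' v' : T.V}
    (h : T.G.Adj u v) (h' : T.G.Adj u' v') (hS : T.side u v = T.side u' v')
    (hu' : (T.G.deleteEdges {s(u,v)}).Reachable u' u)
    (hv' : (T.G.deleteEdges {s(u,v)}).Reachable v' u) :
    u = u' ∧ v = v' := by
  by_cases huu : u = u'
  · subst huu
    refine ⟨rfl, ?_⟩
    by_contra hvv
    have hsub : T.side v u ⊆ T.side u v' := T.side_subset_side h h' hvv
    obtain ⟨x₀, hx₀⟩ := T.side_nonempty h.symm
    have : x₀ ∈ T.side u v := by rw [hS]; exact hsub hx₀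
    exact (T.mem_side_iff h x₀).1 this hx₀
  · exfalso
    rcases T.binary u with hdeg1 | hdeg3
    · obtain ⟨x, hx⟩ := (T.leaf_iff u).1 (by omega)
      have hSx : T.side u v = {x} := by
        rw [← hx]
        exact T.side_leaf (by rw [hx]; exact h)
      rcases T.binary u' with hdeg1' | hdeg3'
      · obtain ⟨y, hy⟩ := (T.leaf_iff u').1 (by omega)
        have hSy : T.side u' v' = {y} := by
          rw [← hy]
          exact T.side_leaf (by rw [hy]; exact h')
        have hxy : ({x} : Set X) = {y} := by rw [← hSx, hS, hSy]
        have : x = y := by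
          rw [Set.singleton_eq_singleton_iff] at hxy
          exact hxy
        exact huu (by rw [← hx, ← hy, this])
      · obtain ⟨c, d, hcv, hdv, hcd, hN⟩ := T.neighbors_of_internal h' hdeg3'
        have huc' : T.G.Adj u' c := T.adj_of_mem_neighborSet (by rw [hN]; simp)
        have hud' : T.G.Adj u' d := T.adj_of_mem_neighborSet (by rw [hN]; simp)
        have hU := T.side_eq_union h' hN hcv hdv hcd
        obtain ⟨x₁, hx₁⟩ := T.side_nonempty huc'.symm
        obtain ⟨x₂, hx₂⟩ := T.side_nonempty hud'.symm
        have hd12 : x₁ ≠ x₂ := by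
          rintro rfl
          have : x₁ ∈ T.side c u' ∩ T.side d u' := ⟨hx₁, hx₂⟩
          rw [T.side_disjoint_at huc' hud' hcd] at this
          exact this
        have e1 : x₁ ∈ ({x} : Set X) := by
          rw [← hSx, hS, hU]; exact Or.inl hx₁
        have e2 : x₂ ∈ ({x} : Set X) := by
          rw [← hSx, hS, hU]; exact Or.inr hx₂
        rw [Set.mem_singleton_iff] at e1 e2
        exact hd12 (e1.trans e2.symm)
    · rcases T.binary u' with hdeg1' | hdeg3'
      · obtain ⟨y, hy⟩ := (T.leaf_iff u').1 (by omega)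
        have hSy : T.side u' v' = {y} := by
          rw [← hy]
          exact T.side_leaf (by rw [hy]; exact h')
        obtain ⟨c, d, hcv, hdv, hcd, hN⟩ := T.neighbors_of_internal h hdeg3
        have huc : T.G.Adj u c := T.adj_of_mem_neighborSet (by rw [hN]; simp)
        have hud : T.G.Adj u d := T.adj_of_mem_neighborSet (by rw [hN]; simp)
        have hU := T.side_eq_union h hN hcv hdv hcd
        obtain ⟨x₁, hx₁⟩ := T.side_nonempty huc.symm
        obtain ⟨x₂, hx₂⟩ := T.side_nonempty hud.symm
        have hd12 : x₁ ≠ x₂ := by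
          rintro rfl
          have : x₁ ∈ T.side c u ∩ T.side d u := ⟨hx₁, hx₂⟩
          rw [T.side_disjoint_at huc hud hcd] at this
          exact this
        have e1 : x₁ ∈ ({y} : Set X) := by
          rw [← hSy, ← hS, hU]; exact Or.inl hx₁
        have e2 : x₂ ∈ ({y} : Set X) := by
          rw [← hSy, ← hS, hU]; exact Or.inr hx₂
        rw [Set.mem_singleton_iff] at e1 e2
        exact hd12 (e1.trans e2.symm)
      · -- both internal: the main argument
        obtain ⟨c, d, hcv, hdv, hcd, hNu⟩ := T.neighbors_of_internal h hdeg3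
        have huc : T.G.Adj u c := T.adj_of_mem_neighborSet (by rw [hNu]; simp)
        have hud : T.G.Adj u d := T.adj_of_mem_neighborSet (by rw [hNu]; simp)
        have hee : s(u,v) ≠ s(u',v') := by
          intro hh
          rw [Sym2.eq_iff] at hh
          rcases hh with ⟨h1, _⟩ | ⟨h1, h2⟩
          · exact huu h1
          · have hvu := hu'
            rw [← h2] at hvu
            exact T.not_reach_of_adj h hvu.symm
        have hA2 : (T.G.deleteEdges {s(u',v')}).Reachable u v' := by
          by_contra hcon
          have hu_side : (T.G.deleteEdges {s(u',v')}).Reachable u u' :=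
            (T.reach_side u' v' u).resolve_right hcon
          obtain ⟨y, hy⟩ := T.side_nonempty h.symm
          have hynS : y ∉ T.side u v := (T.mem_side_iff h.symm y).1 hy
          have hySc : y ∈ T.side v' u' := by
            refine (T.mem_side_iff h'.symm y).2 ?_
            rw [← hS]; exact hynS
          have hy3 : (T.G.deleteEdges {s(u',v')}).Reachable (T.leaf y) v' := by
            have := hySc
            rw [side, Set.mem_setOf_eq,
              show s(v',u') = s(u',v') from Sym2.eq_swap] at this
            exact this
          have hy4 : (T.G.deleteEdges {s(u,v)}).Reachable (T.leaf y) v' := by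
            refine T.reach_del_mono {s(u',v')} {s(u,v)} hy3 hcon ?_
            intro e he
            rw [Set.mem_singleton_iff] at he
            subst he
            exact Or.inl (Sym2.mem_mk_left u v)
          have hyS : y ∈ T.side u v := hy4.trans hv'
          exact hynS hyS
        obtain ⟨n, hn, hrn⟩ := T.reach_to_neighbor (Ne.symm huu)
        have hnv : n ≠ v := by
          intro hnveq
          have hrn2 : (T.G.deleteEdges {s(u,v)}).Reachable u' v := by
            have h0 := hrn
            rw [hnveq] at h0
            rw [show s(v,u) = s(u,v) from Sym2.eq_swap] at h0
            exact h0
          exact T.not_reach_of_adj h (hu'.symm.trans hrn2)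
        have hA2' : (T.G.deleteEdges {s(v',u')}).Reachable u v' := by
          rw [show s(v',u') = s(u',v') from Sym2.eq_swap]
          exact hA2
        have hnN : n ∈ ({v, c, d} : Set T.V) := by rw [← hNu]; exact hn
        have key : ∀ n'' : T.V, T.G.Adj u n'' → n'' ≠ n → n'' ≠ v → False := by
          intro n'' hn'' hne'' hnev
          have hsub : T.side n'' u ⊆ T.side v' u' :=
            T.q_lemma hn hn'' hne'' hrn hA2'
          obtain ⟨x₀, hx₀⟩ := T.side_nonempty hn''.symm
          have hx₀S : x₀ ∈ T.side u' v' := by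
            rw [← hS]
            exact T.side_subset_side hn'' h hnev hx₀
          exact (T.mem_side_iff h' x₀).1 hx₀S (hsub hx₀)
        rcases hnN with rfl | rfl | rfl
        · exact hnv rfl
        · exact key d hud (fun hh => hcd hh.symm) hdv
        · exact key c huc hcd hcv

lemma side_inj (T : PhyloTree X) {u v u' v' : T.V}
    (h : T.G.Adj u v) (h' : T.G.Adj u' v') (hS : T.side u v = T.side u' v') :
    u = u' ∧ v = v' := by
  by_cases hee : s(u,v) = s(u',v')
  · rw [Sym2.eq_iff] at hee
    rcases hee with ⟨h1, h2⟩ | ⟨h1, h2⟩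
    · exact ⟨h1, h2⟩
    · exfalso
      have hS2 : T.side u v = T.side v u := by
        rw [hS, ← h1, ← h2]
      obtain ⟨x₀, hx₀⟩ := T.side_nonempty h
      exact (T.mem_side_iff h x₀).1 hx₀ (by rw [← hS2]; exact hx₀)
  · have hadj' : (T.G.deleteEdges {s(u,v)}).Adj u' v' := by
      rw [deleteEdges_adj]
      refine ⟨h', ?_⟩
      rw [Set.mem_singleton_iff]
      exact fun hh => hee hh.symm
    rcases T.reach_side u v u' with hc | hc
    · exact T.side_inj_aux h h' hS hc (hadj'.symm.reachable.trans hc)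
    · have hSc : T.side v u = T.side v' u' := by
        ext x
        rw [T.mem_side_iff h.symm x, T.mem_side_iff h'.symm x, hS]
      have hc2 : (T.G.deleteEdges {s(v,u)}).Reachable u' v := by
        rw [show s(v,u) = s(u,v) from Sym2.eq_swap]
        exact hc
      have hadj2 : (T.G.deleteEdges {s(v,u)}).Adj u' v' := by
        rw [show s(v,u) = s(u,v) from Sym2.eq_swap]
        exact hadj'
      have := T.side_inj_aux h.symm h'.symm hSc (hadj2.symm.reachable.trans hc2) hc2
      exact ⟨this.2, this.1⟩

lemma three_sides_meet (T : PhyloTree X) {a₁ b₁ a₂ b₂ a₃ b₃ : T.V}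
    (h₁ : T.G.Adj a₁ b₁) (h₂ : T.G.Adj a₂ b₂) (h₃ : T.G.Adj a₃ b₃)
    (d₁₂ : T.side a₁ b₁ ∩ T.side a₂ b₂ = ∅)
    (d₁₃ : T.side a₁ b₁ ∩ T.side a₃ b₃ = ∅)
    (d₂₃ : T.side a₂ b₂ ∩ T.side a₃ b₃ = ∅)
    (hcov : T.side a₁ b₁ ∪ T.side a₂ b₂ ∪ T.side a₃ b₃ = Set.univ) :
    b₁ = b₂ := by
  obtain ⟨x₁, hx₁⟩ := T.side_nonempty h₁
  obtain ⟨x₂, hx₂⟩ := T.side_nonempty h₂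
  obtain ⟨x₃, hx₃⟩ := T.side_nonempty h₃
  have hnm : ∀ {y : X} {A B : Set X}, A ∩ B = ∅ → y ∈ A → y ∉ B := by
    intro y A B hAB hyA hyB
    have : y ∈ A ∩ B := ⟨hyA, hyB⟩
    rw [hAB] at this
    exact this
  have hout₁₂ : ∃ x, x ∉ T.side a₁ b₁ ∧ x ∉ T.side a₂ b₂ :=
    ⟨x₃, hnm (by rw [Set.inter_comm]; exact d₁₃) hx₃, hnm (by rw [Set.inter_comm]; exact d₂₃) hx₃⟩
  have hout₁₃ : ∃ x, x ∉ T.side a₁ b₁ ∧ x ∉ T.side a₃ b₃ :=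
    ⟨x₂, hnm (by rw [Set.inter_comm]; exact d₁₂) hx₂, hnm d₂₃ hx₂⟩
  have hout₂₃ : ∃ x, x ∉ T.side a₂ b₂ ∧ x ∉ T.side a₃ b₃ :=
    ⟨x₁, hnm d₁₂ hx₁, hnm d₁₃ hx₁⟩
  have β₂₁ := T.beta h₁ h₂ d₁₂ hout₁₂
  have β₁₂ := T.beta h₂ h₁ (by rw [Set.inter_comm]; exact d₁₂)
    (by obtain ⟨x, hx, hx'⟩ := hout₁₂; exact ⟨x, hx', hx⟩)
  have β₂₃ := T.beta h₃ h₂ (by rw [Set.inter_comm]; exact d₂₃)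
    (by obtain ⟨x, hx, hx'⟩ := hout₂₃; exact ⟨x, hx', hx⟩)
  have β₃₂ := T.beta h₂ h₃ d₂₃ hout₂₃
  have β₃₁ := T.beta h₁ h₃ d₁₃ hout₁₃
  have β₁₃ := T.beta h₃ h₁ (by rw [Set.inter_comm]; exact d₁₃)
    (by obtain ⟨x, hx, hx'⟩ := hout₁₃; exact ⟨x, hx', hx⟩)
  by_contra hne
  have hne' : b₂ ≠ b₁ := fun hh => hne hh.symm
  -- `b₁` is internal
  have hb₁3 : (T.G.neighborSet b₁).ncard = 3 := by
    rcases T.binary b₁ with h1d | h3d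
    · exfalso
      obtain ⟨x, hx⟩ := (T.leaf_iff b₁).1 (by omega)
      have hxu : x ∈ Set.univ := Set.mem_univ x
      rw [← hcov] at hxu
      rcases hxu with (hxS | hxS) | hxS
      · have hr : (T.G.deleteEdges {s(a₁,b₁)}).Reachable (T.leaf x) a₁ := hxS
        rw [hx] at hr
        exact T.not_reach_of_adj h₁ hr.symm
      · have hr : (T.G.deleteEdges {s(a₂,b₂)}).Reachable (T.leaf x) a₂ := hxS
        rw [hx] at hr
        exact T.not_reach_of_adj h₂ (hr.symm.trans β₁₂.2)
      · have hr : (T.G.deleteEdges {s(a₃,b₃)}).Reachable (T.leaf x) a₃ := hxS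
        rw [hx] at hr
        exact T.not_reach_of_adj h₃ (hr.symm.trans β₁₃.2)
    · exact h3d
  -- `b₂` is internal
  have hb₂3 : (T.G.neighborSet b₂).ncard = 3 := by
    rcases T.binary b₂ with h1d | h3d
    · exfalso
      obtain ⟨x, hx⟩ := (T.leaf_iff b₂).1 (by omega)
      have hxu : x ∈ Set.univ := Set.mem_univ x
      rw [← hcov] at hxu
      rcases hxu with (hxS | hxS) | hxS
      · have hr : (T.G.deleteEdges {s(a₁,b₁)}).Reachable (T.leaf x) a₁ := hxS
        rw [hx] at hr
        exact T.not_reach_of_adj h₁ (hr.symm.trans β₂₁.2)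
      · have hr : (T.G.deleteEdges {s(a₂,b₂)}).Reachable (T.leaf x) a₂ := hxS
        rw [hx] at hr
        exact T.not_reach_of_adj h₂ hr.symm
      · have hr : (T.G.deleteEdges {s(a₃,b₃)}).Reachable (T.leaf x) a₃ := hxS
        rw [hx] at hr
        exact T.not_reach_of_adj h₃ (hr.symm.trans β₂₃.2)
    · exact h3d
  -- cells
  obtain ⟨n, hbn, hrn⟩ := T.reach_to_neighbor hne'
  have hna₁ : n ≠ a₁ := by
    intro hh
    rw [hh] at hrn
    have hr2 : (T.G.deleteEdges {s(a₁,b₁)}).Reachable b₂ a₁ := by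
      rw [show s(a₁,b₁) = s(a₁,b₁) from rfl]
      rw [show s(a₁,b₁) = s(a₁,b₁) from rfl]
      have := hrn
      rw [show s(a₁,b₁) = s(a₁,b₁) from rfl] at this
      exact this
    exact T.not_reach_of_adj h₁ (hr2.symm.trans β₂₁.2)
  obtain ⟨m₀, hbm₀, hrm₀⟩ := T.reach_to_neighbor hne
  have hm₀a₂ : m₀ ≠ a₂ := by
    intro hh
    rw [hh] at hrm₀
    exact T.not_reach_of_adj h₂ (hrm₀.symm.trans β₁₂.2)
  obtain ⟨c', d', hc'a, hd'a, hc'd', hNb₂⟩ := T.neighbors_of_internal h₂.symm hb₂3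
  have hbc' : T.G.Adj b₂ c' := T.adj_of_mem_neighborSet (by rw [hNb₂]; simp)
  have hbd' : T.G.Adj b₂ d' := T.adj_of_mem_neighborSet (by rw [hNb₂]; simp)
  have key : ∀ m m'' : T.V, T.G.Adj b₂ m → T.G.Adj b₂ m'' → m ≠ m'' → m ≠ a₂ →
      m'' ≠ a₂ → T.G.neighborSet b₂ = {a₂, m, m''} →
      (T.G.deleteEdges {s(m,b₂)}).Reachable b₁ m → False := by
    intro m m'' hbm hbm'' hmm hma hm''a hN hcell
    have ha₃b₂ : a₃ ≠ b₂ := by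
      intro hh
      have hx := β₂₃.2
      rw [← hh] at hx
      exact T.not_reach_of_adj h₃ hx
    have hnra₃ : ¬ (T.G.deleteEdges {s(a₃,b₃)}).Reachable b₂ a₃ := by
      intro hcon
      exact T.not_reach_of_adj h₃ (hcon.symm.trans β₂₃.2)
    obtain ⟨q, hb₂q, hrq⟩ := T.reach_to_neighbor ha₃b₂
    have hqa₂ : q ≠ a₂ := by
      intro hh
      rw [hh] at hrq
      exact T.not_reach_of_adj h₂ (hrq.symm.trans β₃₂.1)
    have hqmem : q ∈ ({a₂, m, m''} : Set T.V) := by rw [← hN]; exact hb₂q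
    have hS₃sub : T.side a₃ b₃ ⊆ T.side q b₂ := by
      intro x hx
      exact T.cell_transfer hnra₃ hx hrq
    have hS₁sub : T.side a₁ b₁ ⊆ T.side m b₂ :=
      T.q_lemma hbn h₁.symm (fun hh => hna₁ hh.symm) hrn hcell
    rcases hqmem with hq | hq | hq
    · exact hqa₂ hq
    · -- q = m : the cell of m'' is empty, contradiction
      rw [hq] at hS₃sub
      obtain ⟨x₀, hx₀⟩ := T.side_nonempty hbm''.symm
      have hxu : x₀ ∈ Set.univ := Set.mem_univ x₀
      rw [← hcov] at hxu
      rcases hxu with (hxS | hxS) | hxS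
      · exact hnm (T.side_disjoint_at hbm hbm'' hmm) (hS₁sub hxS) hx₀
      · exact hnm (T.side_disjoint_at (h₂.symm) hbm'' (fun hh => hm''a hh.symm)) hxS hx₀
      · exact hnm (T.side_disjoint_at hbm hbm'' hmm) (hS₃sub hxS) hx₀
    · -- q = m'' : then side m b₂ = S₁, contradiction with side_inj
      rw [hq] at hS₃sub
      have hsub2 : T.side m b₂ ⊆ T.side a₁ b₁ := by
        intro x hxm
        have hxu : x ∈ Set.univ := Set.mem_univ x
        rw [← hcov] at hxu
        rcases hxu with (hxS | hxS) | hxS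
        · exact hxS
        · exact absurd hxm (hnm (T.side_disjoint_at (h₂.symm) hbm (fun hh => hma hh.symm)) hxS)
        · exact absurd hxm (hnm (T.side_disjoint_at hbm'' hbm (fun hh => hmm hh.symm)) (hS₃sub hxS))
      have hEq : T.side a₁ b₁ = T.side m b₂ := le_antisymm hS₁sub hsub2
      obtain ⟨_, hb⟩ := T.side_inj h₁ hbm.symm hEq
      exact hne hb
  have hm₀mem : m₀ ∈ ({a₂, c', d'} : Set T.V) := by rw [← hNb₂]; exact hbm₀
  rcases hm₀mem with hm | hm | hm
  · exact hm₀a₂ hm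
  · refine key c' d' hbc' hbd' hc'd' (fun hh => hc'a hh) (fun hh => hd'a hh) hNb₂ ?_
    rw [← hm]; exact hrm₀
  · refine key d' c' hbd' hbc' (fun hh => hc'd' hh.symm) (fun hh => hd'a hh) (fun hh => hc'a hh) ?_ ?_
    · rw [hNb₂]
      ext z
      simp [Set.mem_insert_iff]
      tauto
    · rw [← hm]; exact hrm₀

/-- `u'` realizes the same system of neighbor-sides as `u`. -/
def SidesMatch (T T' : PhyloTree X) (u : T.V) (u' : T'.V) : Prop :=
  ∀ n : T.V, T.G.Adj u n → ∃ n' : T'.V, T'.G.Adj u' n' ∧ T.side n u = T'.side n' u'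

lemma leaf_nbhd (T : PhyloTree X) (x : X) :
    ∃ v, T.G.Adj (T.leaf x) v ∧ T.G.neighborSet (T.leaf x) = {v} := by
  haveI := T.fintypeV
  have h1 : (T.G.neighborSet (T.leaf x)).ncard = 1 := by
    rcases T.binary (T.leaf x) with h' | h'
    · exact h'
    · have := (T.leaf_iff (T.leaf x)).2 ⟨x, rfl⟩
      omega
  obtain ⟨v, hv⟩ := Set.ncard_eq_one.1 h1
  refine ⟨v, ?_, hv⟩
  exact T.adj_of_mem_neighborSet (by rw [hv]; rfl)

lemma internal_three (T : PhyloTree X) {u : T.V}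
    (h3 : (T.G.neighborSet u).ncard = 3) :
    ∃ n₁ n₂ n₃ : T.V, n₂ ≠ n₁ ∧ n₃ ≠ n₁ ∧ n₂ ≠ n₃ ∧
      T.G.neighborSet u = {n₁, n₂, n₃} := by
  haveI := T.fintypeV
  have hne : (T.G.neighborSet u).Nonempty := by
    rw [← Set.ncard_pos (Set.toFinite _)]
    omega
  obtain ⟨v, hv⟩ := hne
  obtain ⟨c, d, hcv, hdv, hcd, hN⟩ :=
    T.neighbors_of_internal (T.adj_of_mem_neighborSet hv) h3
  exact ⟨v, c, d, hcv, hdv, hcd, hN⟩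

lemma cells_cover (T : PhyloTree X) {u n₁ n₂ n₃ : T.V}
    (h21 : n₂ ≠ n₁) (h31 : n₃ ≠ n₁) (h23 : n₂ ≠ n₃)
    (hN : T.G.neighborSet u = {n₁, n₂, n₃}) :
    T.side n₁ u ∪ T.side n₂ u ∪ T.side n₃ u = Set.univ := by
  have h1 : T.G.Adj u n₁ := T.adj_of_mem_neighborSet (by rw [hN]; simp)
  have hU := T.side_eq_union h1 hN h21 h31 h23
  have h2 := T.side_union u n₁
  ext z
  simp only [Set.mem_union, Set.mem_univ, iff_true]
  have hz : z ∈ T.side u n₁ ∪ T.side n₁ u := by rw [h2]; trivial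
  rcases hz with hz | hz
  · rw [hU] at hz
    rcases hz with hz | hz
    · exact Or.inl (Or.inr hz)
    · exact Or.inr hz
  · exact Or.inl (Or.inl hz)

lemma match_leaf (T T' : PhyloTree X) {x : X} {u' : T'.V}
    (hm : SidesMatch T T' (T.leaf x) u') : u' = T'.leaf x := by
  obtain ⟨v, hv, _⟩ := T.leaf_nbhd x
  obtain ⟨n', hn', hSn'⟩ := hm v hv
  -- `u'` is a leaf
  have hleaf' : ∃ y, T'.leaf y = u' := by
    rw [← T'.leaf_iff]
    by_contra hdeg
    have h3 : (T'.G.neighborSet u').ncard = 3 :=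
      (T'.binary u').resolve_left (fun h1 => hdeg (by omega))
    obtain ⟨c, d, hcn, hdn, hcd, hN'⟩ := T'.neighbors_of_internal hn' h3
    have hbc : T'.G.Adj u' c := T'.adj_of_mem_neighborSet (by rw [hN']; simp)
    have hbd : T'.G.Adj u' d := T'.adj_of_mem_neighborSet (by rw [hN']; simp)
    have hU' := T'.side_eq_union hn' hN' hcn hdn hcd
    -- `T'.side u' n'` is the complement of `T'.side n' u'` which equals `T.side v (leaf x)`,
    -- whose complement is the singleton {x}
    obtain ⟨z₁, hz₁⟩ := T'.side_nonempty hbc.symm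
    obtain ⟨z₂, hz₂⟩ := T'.side_nonempty hbd.symm
    have hz12 : z₁ ≠ z₂ := by
      rintro rfl
      have : z₁ ∈ T'.side c u' ∩ T'.side d u' := ⟨hz₁, hz₂⟩
      rw [T'.side_disjoint_at hbc hbd hcd] at this
      exact this
    have hxmem : ∀ z, z ∈ T'.side u' n' → z = x := by
      intro z hz
      have h1 : z ∉ T'.side n' u' := (T'.mem_side_iff hn' z).1 hz
      rw [← hSn'] at h1
      have h2 : z ∈ T.side (T.leaf x) v := (T.mem_side_iff hv z).2 h1
      rw [T.side_leaf hv] at h2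
      exact h2
    have e1 : z₁ = x := hxmem z₁ (by rw [hU']; exact Or.inl hz₁)
    have e2 : z₂ = x := hxmem z₂ (by rw [hU']; exact Or.inr hz₂)
    exact hz12 (e1.trans e2.symm)
  obtain ⟨y, hy⟩ := hleaf'
  -- now identify `y = x`
  obtain ⟨v', hv', _⟩ := T'.leaf_nbhd y
  have hn'v' : n' = v' := by
    obtain ⟨w, hw⟩ := T'.leaf_nbhd y
    have h1 : n' ∈ T'.G.neighborSet (T'.leaf y) := by rw [hy]; exact hn'
    rw [hw.2] at h1
    have h2 : v' ∈ T'.G.neighborSet (T'.leaf y) := hv'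
    rw [hw.2] at h2
    rw [Set.mem_singleton_iff] at h1 h2
    rw [h1, h2]
  have hxny : x = y := by
    -- x ∉ side v (leaf x); so x ∉ side' n' u'; so x ∈ side' u' n' = {y}
    have h1 : x ∉ T.side v (T.leaf x) := by
      intro hcon
      have : x ∈ T.side (T.leaf x) v := by rw [T.side_leaf hv]; rfl
      exact (T.mem_side_iff hv x).1 this hcon
    rw [hSn'] at h1
    have h2 : x ∈ T'.side u' n' := (T'.mem_side_iff hn' x).2 h1
    rw [← hy, hn'v'] at h2
    rw [T'.side_leaf (by rw [← hn'v', hy]; exact hn')] at h2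
    exact h2
  rw [← hy, hxny]

lemma match_exists (T T' : PhyloTree X) (hsp : T.splits = T'.splits) (u : T.V) :
    ∃ u' : T'.V, SidesMatch T T' u u' := by
  rcases T.binary u with h1 | h3
  · obtain ⟨x, hx⟩ := (T.leaf_iff u).1 (by omega)
    obtain ⟨v', hv', _⟩ := T'.leaf_nbhd x
    refine ⟨T'.leaf x, ?_⟩
    intro n hn
    have hn2 : T.G.Adj (T.leaf x) n := by rw [hx]; exact hn
    refine ⟨v', hv', ?_⟩
    ext z
    rw [← hx]
    rw [T.mem_side_iff hn2.symm z, T'.mem_side_iff hv'.symm z, T.side_leaf hn2,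
      T'.side_leaf hv']
  · obtain ⟨n₁, n₂, n₃, h21, h31, h23, hN⟩ := T.internal_three h3
    have ha1 : T.G.Adj u n₁ := T.adj_of_mem_neighborSet (by rw [hN]; simp)
    have ha2 : T.G.Adj u n₂ := T.adj_of_mem_neighborSet (by rw [hN]; simp)
    have ha3 : T.G.Adj u n₃ := T.adj_of_mem_neighborSet (by rw [hN]; simp)
    have hd12 : T.side n₁ u ∩ T.side n₂ u = ∅ :=
      T.side_disjoint_at ha1 ha2 (Ne.symm h21)
    have hd13 : T.side n₁ u ∩ T.side n₃ u = ∅ :=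
      T.side_disjoint_at ha1 ha3 (Ne.symm h31)
    have hd23 : T.side n₂ u ∩ T.side n₃ u = ∅ :=
      T.side_disjoint_at ha2 ha3 h23
    have hcov := T.cells_cover h21 h31 h23 hN
    have hs1 : T.side n₁ u ∈ T'.splits := by rw [← hsp]; exact ⟨n₁, u, ha1.symm, rfl⟩
    have hs2 : T.side n₂ u ∈ T'.splits := by rw [← hsp]; exact ⟨n₂, u, ha2.symm, rfl⟩
    have hs3 : T.side n₃ u ∈ T'.splits := by rw [← hsp]; exact ⟨n₃, u, ha3.symm, rfl⟩
    obtain ⟨p₁, q₁, hpq₁, he₁⟩ := hs1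
    obtain ⟨p₂, q₂, hpq₂, he₂⟩ := hs2
    obtain ⟨p₃, q₃, hpq₃, he₃⟩ := hs3
    have hb12 : q₁ = q₂ := by
      refine T'.three_sides_meet hpq₁ hpq₂ hpq₃ ?_ ?_ ?_ ?_
      · rw [← he₁, ← he₂]; exact hd12
      · rw [← he₁, ← he₃]; exact hd13
      · rw [← he₂, ← he₃]; exact hd23
      · rw [← he₁, ← he₂, ← he₃]; exact hcov
    have hb13 : q₁ = q₃ := by
      refine T'.three_sides_meet hpq₁ hpq₃ hpq₂ ?_ ?_ ?_ ?_
      · rw [← he₁, ← he₃]; exact hd13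
      · rw [← he₁, ← he₂]; exact hd12
      · rw [← he₂, ← he₃, Set.inter_comm]; exact hd23
      · rw [← he₁, ← he₂, ← he₃]
        rw [← hcov]
        ext z
        simp only [Set.mem_union]
        tauto
    refine ⟨q₁, ?_⟩
    intro n hn
    have hmem : n ∈ ({n₁, n₂, n₃} : Set T.V) := by rw [← hN]; exact hn
    rcases hmem with rfl | rfl | rfl
    · exact ⟨p₁, hpq₁.symm, he₁⟩
    · refine ⟨p₂, ?_, ?_⟩
      · rw [hb12]; exact hpq₂.symm
      · rw [he₂, ← hb12]
    · refine ⟨p₃, ?_, ?_⟩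
      · rw [hb13]; exact hpq₃.symm
      · rw [he₃, ← hb13]

lemma match_symm (T T' : PhyloTree X) {u : T.V} {u' : T'.V}
    (hm : SidesMatch T T' u u') : SidesMatch T' T u' u := by
  rcases T.binary u with h1 | h3
  · obtain ⟨x, hx⟩ := (T.leaf_iff u).1 (by omega)
    have hm2 : SidesMatch T T' (T.leaf x) u' := by rw [hx]; exact hm
    have heq := match_leaf T T' hm2
    obtain ⟨v, hv, _⟩ := T.leaf_nbhd x
    obtain ⟨v', hv', hNv'⟩ := T'.leaf_nbhd x
    intro n' hn'
    have hn'2 : T'.G.Adj (T'.leaf x) n' := by rw [← heq]; exact hn'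
    refine ⟨v, by rw [hx] at hv; exact hv, ?_⟩
    ext z
    have goal1 : z ∈ T'.side n' u' ↔ z ≠ x := by
      rw [show T'.side n' u' = T'.side n' (T'.leaf x) from by rw [heq]]
      rw [T'.mem_side_iff hn'2.symm z, T'.side_leaf hn'2]
      simp
    have goal2 : z ∈ T.side v u ↔ z ≠ x := by
      rw [show T.side v u = T.side v (T.leaf x) from by rw [hx]]
      rw [T.mem_side_iff hv.symm z, T.side_leaf hv]
      simp
    rw [goal1, goal2]
  · obtain ⟨n₁, n₂, n₃, h21, h31, h23, hN⟩ := T.internal_three h3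
    have ha1 : T.G.Adj u n₁ := T.adj_of_mem_neighborSet (by rw [hN]; simp)
    have ha2 : T.G.Adj u n₂ := T.adj_of_mem_neighborSet (by rw [hN]; simp)
    have ha3 : T.G.Adj u n₃ := T.adj_of_mem_neighborSet (by rw [hN]; simp)
    obtain ⟨n'₁, hn'₁, he₁⟩ := hm n₁ ha1
    obtain ⟨n'₂, hn'₂, he₂⟩ := hm n₂ ha2
    obtain ⟨n'₃, hn'₃, he₃⟩ := hm n₃ ha3
    have hnonsense : ∀ i j : T.V, T.G.Adj u i → T.G.Adj u j → i ≠ j →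
        ∀ i' j' : T'.V, T.side i u = T'.side i' u' → T.side j u = T'.side j' u' →
        i' ≠ j' := by
      intro i j hi hj hij i' j' hei hej hcon
      obtain ⟨z, hz⟩ := T.side_nonempty hi.symm
      have hz2 : z ∈ T'.side i' u' := by rw [← hei]; exact hz
      have hz3 : z ∈ T.side j u := by rw [hej, ← hcon, ← hei]; exact hz
      have : z ∈ T.side i u ∩ T.side j u := ⟨hz, hz3⟩
      rw [T.side_disjoint_at hi hj hij] at this
      exact this
    have hd12' : n'₁ ≠ n'₂ := hnonsense n₁ n₂ ha1 ha2 (Ne.symm h21) n'₁ n'₂ he₁ he₂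
    have hd13' : n'₁ ≠ n'₃ := hnonsense n₁ n₃ ha1 ha3 (Ne.symm h31) n'₁ n'₃ he₁ he₃
    have hd23' : n'₂ ≠ n'₃ := hnonsense n₂ n₃ ha2 ha3 h23 n'₂ n'₃ he₂ he₃
    have h3' : (T'.G.neighborSet u').ncard = 3 := by
      rcases T'.binary u' with h1' | h3'
      · exfalso
        obtain ⟨α, hα⟩ := Set.ncard_eq_one.1 h1'
        have m1 : n'₁ ∈ T'.G.neighborSet u' := hn'₁
        have m2 : n'₂ ∈ T'.G.neighborSet u' := hn'₂
        rw [hα, Set.mem_singleton_iff] at m1 m2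
        exact hd12' (m1.trans m2.symm)
      · exact h3'
    have hsub : ({n'₁, n'₂, n'₃} : Set T'.V) ⊆ T'.G.neighborSet u' := by
      intro z hz
      rcases hz with rfl | rfl | rfl
      · exact hn'₁
      · exact hn'₂
      · exact hn'₃
    have hNcard : ({n'₁, n'₂, n'₃} : Set T'.V).ncard = 3 := by
      rw [Set.ncard_insert_of_notMem (by simp [hd12', hd13']),
        Set.ncard_insert_of_notMem (by simp [hd23']), Set.ncard_singleton]
    have hNeq : ({n'₁, n'₂, n'₃} : Set T'.V) = T'.G.neighborSet u' := by
      haveI := T'.fintypeV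
      exact Set.eq_of_subset_of_ncard_le hsub (by rw [hNcard, h3']) (Set.toFinite _)
    intro m' hm'
    have : m' ∈ ({n'₁, n'₂, n'₃} : Set T'.V) := by
      rw [hNeq]; exact hm'
    rcases this with rfl | rfl | rfl
    · exact ⟨n₁, ha1, he₁.symm⟩
    · exact ⟨n₂, ha2, he₂.symm⟩
    · exact ⟨n₃, ha3, he₃.symm⟩

lemma match_unique (T T' : PhyloTree X) {u : T.V} {u'₁ u'₂ : T'.V}
    (hm1 : SidesMatch T T' u u'₁) (hm2 : SidesMatch T T' u u'₂) : u'₁ = u'₂ := by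
  rcases T.binary u with h1 | h3
  · obtain ⟨x, hx⟩ := (T.leaf_iff u).1 (by omega)
    have e1 := match_leaf T T' (by rw [hx]; exact hm1)
    have e2 := match_leaf T T' (by rw [hx]; exact hm2)
    rw [e1, e2]
  · obtain ⟨n₁, n₂, n₃, h21, h31, h23, hN⟩ := T.internal_three h3
    have ha1 : T.G.Adj u n₁ := T.adj_of_mem_neighborSet (by rw [hN]; simp)
    have ha2 : T.G.Adj u n₂ := T.adj_of_mem_neighborSet (by rw [hN]; simp)
    have ha3 : T.G.Adj u n₃ := T.adj_of_mem_neighborSet (by rw [hN]; simp)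
    obtain ⟨n'₁, hn'₁, he₁⟩ := hm1 n₁ ha1
    obtain ⟨m'₂, hm'₂, hf₂⟩ := hm2 n₂ ha2
    obtain ⟨m'₃, hm'₃, hf₃⟩ := hm2 n₃ ha3
    refine T'.three_sides_meet hn'₁.symm hm'₂.symm hm'₃.symm ?_ ?_ ?_ ?_
    · rw [← he₁, ← hf₂]
      exact T.side_disjoint_at ha1 ha2 (Ne.symm h21)
    · rw [← he₁, ← hf₃]
      exact T.side_disjoint_at ha1 ha3 (Ne.symm h31)
    · rw [← hf₂, ← hf₃]
      exact T.side_disjoint_at ha2 ha3 h23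
    · rw [← he₁, ← hf₂, ← hf₃]
      exact T.cells_cover h21 h31 h23 hN

lemma match_adj (T T' : PhyloTree X) {u v : T.V} {u' v' : T'.V}
    (huv : T.G.Adj u v) (hm1 : SidesMatch T T' u u') (hm2 : SidesMatch T T' v v') :
    T'.G.Adj u' v' := by
  obtain ⟨p, hp, hSp⟩ := hm1 v huv
  obtain ⟨q, hq, hSq⟩ := hm2 u huv.symm
  have hEq : T'.side u' p = T'.side q v' := by
    ext z
    rw [T'.mem_side_iff hp z, ← hSp]
    rw [show (z ∉ T.side v u) = (z ∈ T.side u v) from by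
      rw [eq_iff_iff]
      exact ⟨fun hh => (T.mem_side_iff huv z).2 hh, fun hh hcon =>
        (T.mem_side_iff huv z).1 hh hcon⟩]
    rw [hSq]
  obtain ⟨e1, e2⟩ := T'.side_inj hp hq.symm hEq
  rw [e2] at hp
  exact hp

lemma iso_of_splits_eq (T T' : PhyloTree X) (hsp : T.splits = T'.splits) :
    T.Isomorphic T' := by
  classical
  choose φ hφ using match_exists T T' hsp
  choose ψ hψ using match_exists T' T hsp.symm
  have hleft : Function.LeftInverse ψ φ := by
    intro u
    exact match_unique T' T (hψ (φ u)) (match_symm T T' (hφ u))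
  have hright : Function.RightInverse ψ φ := by
    intro u'
    exact match_unique T T' (hφ (ψ u')) (match_symm T' T (hψ u'))
  refine ⟨⟨⟨φ, ψ, hleft, hright⟩, ?_⟩, ?_⟩
  · intro a b
    constructor
    · intro h
      have := match_adj T' T h (hψ (φ a)) (hψ (φ b))
      rwa [hleft a, hleft b] at this
    · intro h
      exact match_adj T T' h (hφ a) (hφ b)
  · intro x
    have hm : SidesMatch T T' (T.leaf x) (φ (T.leaf x)) := hφ _
    exact match_leaf T T' hm


end PhyloTree

/-- for `k ∈ {1,2}`, two binary phylogenetic `X`-trees are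
isomorphic iff they have the same `A_k` alignment. -/
theorem stmt_15 {X : Type*} [Fintype X] (k : ℕ) (hk : k = 1 ∨ k = 2)
    (T T' : PhyloTree X) :
    T.Isomorphic T' ↔ T.Ak k = T'.Ak k := by
  constructor
  · intro hiso
    ext f
    simp only [PhyloTree.Ak, Set.mem_setOf_eq, PhyloTree.parsimony_eq_of_iso hiso f]
  · intro hAk
    rcases hk with rfl | rfl
    · exact PhyloTree.iso_of_splits_eq T T' (PhyloTree.splits_eq_of_Ak_one T T' hAk)
    · exact PhyloTree.iso_of_splits_eq T T' (PhyloTree.splits_eq_of_Ak_two T T' hAk)
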